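/- Let S be a finite set of at least 3 points in the plane, let m be a Hamiltonian cycle on S minimizing (lexicographically) the decreasingly-sorted sequence of edge lengths, and let xy be an edge of m with x = (-1,0), y = (1,0). If u is a point of S in the closed unit disk centered at the origin with u ≠ x, u ≠ y, and s is the neighbor of u along m on the side of x (the predecessor of u when traversing m from x through y), with s ≠ y, then dist(s, x) ≥ dist(s, u) and dist(s, x) ≥ 2. -/

import Mathlib

open Metric

noncomputable section

/-- A Hamiltonian cycle on the point set `S`: a cyclic ordering (an injection from
`ZMod S.card`, hence a bijection onto `S`) of all points of `S`. -/
def IsHamCycle (S : Finset (EuclideanSpace ℝ (Fin 2)))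
    (c : ZMod S.card → EuclideanSpace ℝ (Fin 2)) : Prop :=
  Function.Injective c ∧ ∀ i, c i ∈ S

/-- The distance sequence of a Hamiltonian cycle: edge lengths sorted decreasingly. -/
def dseq (S : Finset (EuclideanSpace ℝ (Fin 2)))
    (c : ZMod S.card → EuclideanSpace ℝ (Fin 2)) : List ℝ :=
  ((List.finRange S.card).map
    (fun i => dist (c ((i : ℕ) : ZMod S.card)) (c (((i : ℕ) : ZMod S.card) + 1)))).insertionSort
    (· ≥ ·)

/-- `m` is a Hamiltonian cycle on `S` minimizing lexicographically the
decreasingly-sorted sequence of its edge lengths. -/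
def IsMinHamCycle (S : Finset (EuclideanSpace ℝ (Fin 2)))
    (m : ZMod S.card → EuclideanSpace ℝ (Fin 2)) : Prop :=
  IsHamCycle S m ∧ ∀ c, IsHamCycle S c → ¬ List.Lex (· < ·) (dseq S c) (dseq S m)

-- === auxiliary machinery ===

noncomputable def dsort (M : Multiset ℝ) : List ℝ := M.sort (· ≥ ·)

lemma dsort_perm (M : Multiset ℝ) : (dsort M : Multiset ℝ) = M := Multiset.sort_eq M _

lemma insertionSort_eq_dsort (l : List ℝ) : l.insertionSort (· ≥ ·) = dsort ↑l := by
  refine List.Perm.eq_of_pairwise' (List.pairwise_insertionSort _ l) (Multiset.pairwise_sort _ _) ?_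
  exact (List.perm_insertionSort _ l).trans
    (Quotient.exact (Multiset.sort_eq (α := ℝ) ↑l (· ≥ ·))).symm

lemma dsort_struct (M : Multiset ℝ) (hM : M ≠ 0) :
    ∃ a, a ∈ M ∧ (∀ z ∈ M, z ≤ a) ∧ dsort M = a :: dsort (M.erase a) := by
  have hp := dsort_perm M
  have hs := Multiset.pairwise_sort (α := ℝ) M (· ≥ ·)
  obtain ⟨a, t, ht⟩ : ∃ a t, dsort M = a :: t := by
    cases h : dsort M with
    | nil => exact absurd (by rw [← hp, h]; rfl) hM
    | cons a t => exact ⟨a, t, rfl⟩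
  have haM : a ∈ M := by rw [← hp, ht]; exact List.mem_cons_self (a := a) (l := t)
  rw [show (Multiset.sort M (· ≥ ·) : List ℝ) = dsort M from rfl, ht] at hs
  rw [ht] at hp
  refine ⟨a, haM, ?_, ?_⟩
  · intro z hz
    rw [← hp] at hz
    rcases List.mem_cons.mp hz with h | h
    · exact le_of_eq h
    · exact (List.rel_of_pairwise_cons hs h : a ≥ z)
  · rw [ht]
    congr 1
    refine List.Perm.eq_of_pairwise' hs.of_cons (Multiset.pairwise_sort _ _) ?_
    have : (t : Multiset ℝ) = M.erase a := by
      rw [← hp]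
      exact (Multiset.erase_cons_head a ↑t).symm
    exact (Quotient.exact ((dsort_perm (M.erase a)).trans this.symm)).symm

lemma key_lex (v : ℝ) : ∀ (N : ℕ) (C P Q : Multiset ℝ), C.card = N →
    (∀ p ∈ P, p < v) → (∃ q ∈ Q, v ≤ q) → P.card = Q.card →
    List.Lex (· < ·) (dsort (C + P)) (dsort (C + Q)) := by
  intro N
  induction N using Nat.strong_induction_on with
  | _ N ih =>
    intro C P Q hC hP hQ hcard
    obtain ⟨q0, hq0Q, hq0v⟩ := hQ
    have hQ0 : C + Q ≠ 0 := by
      intro h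
      have : q0 ∈ C + Q := Multiset.mem_add.mpr (Or.inr hq0Q)
      rw [h] at this; exact absurd this (Multiset.notMem_zero _)
    have hP0 : C + P ≠ 0 := by
      intro h
      have hPP : P = 0 := by
        have := congrArg Multiset.card h
        simp at this; exact this.2
      rw [hPP] at hcard
      have : Q = 0 := Multiset.card_eq_zero.mp hcard.symm
      rw [this] at hq0Q; exact absurd hq0Q (Multiset.notMem_zero _)
    obtain ⟨a, haM, haMax, haEq⟩ := dsort_struct _ hP0
    obtain ⟨b, hbM, hbMax, hbEq⟩ := dsort_struct _ hQ0
    have hbv : v ≤ b := le_trans hq0v (hbMax q0 (Multiset.mem_add.mpr (Or.inr hq0Q)))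
    rw [haEq, hbEq]
    rcases lt_or_ge a b with h | h
    · exact List.Lex.rel h
    · have haC : a ∈ C := by
        rcases Multiset.mem_add.mp haM with h' | h'
        · exact h'
        · exact absurd (hP _ h') (not_lt.mpr (le_trans hbv h))
      have hab : a = b := le_antisymm (hbMax a (Multiset.mem_add.mpr (Or.inl haC))) h
      subst hab
      have e1 : (C + P).erase a = C.erase a + P := by
        rw [Multiset.erase_add_left_pos _ haC]
      have e2 : (C + Q).erase a = C.erase a + Q := by
        rw [Multiset.erase_add_left_pos _ haC]
      rw [e1, e2]
      refine List.Lex.cons ?_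
      have hcard' : (C.erase a).card < N := by
        rw [← hC]; exact Multiset.card_erase_lt_of_mem haC
      exact ih _ hcard' _ _ _ rfl hP ⟨q0, hq0Q, hq0v⟩ hcard

lemma exchange {α : Type*} [PseudoMetricSpace α] {n : ℕ} [NeZero n] (m : ZMod n → α)
    (a b : ZMod n) (hd2 : 2 ≤ (b - a).val) (hdn : (b - a).val + 2 ≤ n) :
    ∃ σ : ZMod n → ZMod n, Function.Bijective σ ∧ ∃ R : Multiset ℝ,
      Multiset.map (fun k => dist (m (σ k)) (m (σ (k + 1)))) Finset.univ.val
        = dist (m a) (m b) ::ₘ dist (m (a + 1)) (m (b + 1)) ::ₘ R ∧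
      Multiset.map (fun k => dist (m k) (m (k + 1))) Finset.univ.val
        = dist (m a) (m (a + 1)) ::ₘ dist (m b) (m (b + 1)) ::ₘ R := by
  set d := (b - a).val with hd
  have hnd : d < n := ZMod.val_lt _
  have tval : ∀ t : ℕ, t < n → ((t : ZMod n)).val = t := fun t ht => ZMod.val_cast_of_lt ht
  have hsub : ∀ t : ℕ, t < n → ((a + (t : ZMod n)) - a).val = t := by
    intro t ht; rw [add_sub_cancel_left, tval t ht]
  have hkd : ∀ k : ZMod n, k = a + (((k - a).val : ℕ) : ZMod n) := by
    intro k
    rw [ZMod.natCast_rightInverse (k - a), add_sub_cancel]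
  have hb : b = a + ((d : ℕ) : ZMod n) := hkd b
  have hinj : ∀ t₁ t₂ : ℕ, t₁ < n → t₂ < n → a + (t₁ : ZMod n) = a + (t₂ : ZMod n) → t₁ = t₂ := by
    intro t₁ t₂ h₁ h₂ h
    have h' : ((a + (t₁ : ZMod n)) - a).val = ((a + (t₂ : ZMod n)) - a).val := by rw [h]
    rwa [hsub t₁ h₁, hsub t₂ h₂] at h'
  have hsucc : ∀ t : ℕ, (a + (t : ZMod n)) + 1 = a + ((t + 1 : ℕ) : ZMod n) := by
    intro t; push_cast; ring
  set σ : ZMod n → ZMod n := fun k =>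
    if 1 ≤ (k - a).val ∧ (k - a).val ≤ d then a + (((d + 1 - (k - a).val : ℕ)) : ZMod n) else k
    with hσ
  have σspec : ∀ t : ℕ, t < n →
      σ (a + (t : ZMod n)) = if 1 ≤ t ∧ t ≤ d then a + (((d + 1 - t : ℕ)) : ZMod n)
        else a + (t : ZMod n) := by
    intro t ht
    rw [hσ]; simp only [hsub t ht]
  have σinv : Function.Involutive σ := by
    intro k
    conv_lhs => rw [hkd k]
    obtain ⟨t, ht, hk⟩ : ∃ t : ℕ, t < n ∧ (k - a).val = t := ⟨(k - a).val, ZMod.val_lt _, rfl⟩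
    rw [hk, σspec t ht]
    by_cases h : 1 ≤ t ∧ t ≤ d
    · rw [if_pos h]
      have h1 : d + 1 - t < n := by omega
      rw [σspec _ h1, if_pos (by omega), show d + 1 - (d + 1 - t) = t by omega, ← hk, ← hkd k]
    · rw [if_neg h, σspec t ht, if_neg h, ← hk, ← hkd k]
  set τ : ZMod n → ZMod n := fun k =>
    if 1 ≤ (k - a).val ∧ (k - a).val ≤ d - 1 then a + (((d - (k - a).val : ℕ)) : ZMod n) else k
    with hτ
  have τspec : ∀ t : ℕ, t < n →
      τ (a + (t : ZMod n)) = if 1 ≤ t ∧ t ≤ d - 1 then a + (((d - t : ℕ)) : ZMod n)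
        else a + (t : ZMod n) := by
    intro t ht
    rw [hτ]; simp only [hsub t ht]
  have τinv : Function.Involutive τ := by
    intro k
    conv_lhs => rw [hkd k]
    obtain ⟨t, ht, hk⟩ : ∃ t : ℕ, t < n ∧ (k - a).val = t := ⟨(k - a).val, ZMod.val_lt _, rfl⟩
    rw [hk, τspec t ht]
    by_cases h : 1 ≤ t ∧ t ≤ d - 1
    · rw [if_pos h]
      have h1 : d - t < n := by omega
      rw [τspec _ h1, if_pos (by omega), show d - (d - t) = t by omega, ← hk, ← hkd k]
    · rw [if_neg h, τspec t ht, if_neg h, ← hk, ← hkd k]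
  have hba : b ≠ a := by
    intro h
    rw [h] at hb
    have h0 : a + ((0 : ℕ) : ZMod n) = a + ((d : ℕ) : ZMod n) := by
      rw [Nat.cast_zero, add_zero]; exact hb
    have := hinj 0 d (by omega) hnd h0
    omega
  set E : ZMod n → ℝ := fun k => dist (m k) (m (k + 1)) with hE
  set F : ZMod n → ℝ := fun k => dist (m (σ k)) (m (σ (k + 1))) with hF
  set G : ZMod n → ℝ := fun k =>
    if k = a then dist (m a) (m b) else if k = b then dist (m (a + 1)) (m (b + 1)) else E k with hG
  have FG : ∀ k, F k = G (τ k) := by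
    intro k
    obtain ⟨t, ht, rfl⟩ : ∃ t : ℕ, t < n ∧ k = a + (t : ZMod n) := ⟨(k - a).val, ZMod.val_lt _, hkd k⟩
    rcases show t = 0 ∨ (1 ≤ t ∧ t ≤ d - 1) ∨ t = d ∨ (d + 1 ≤ t ∧ t < n) by omega with
      h0 | h1 | h2 | h3
    · subst h0
      have ez : a + ((0 : ℕ) : ZMod n) = a := by rw [Nat.cast_zero, add_zero]
      have e1 : σ (a + ((0 : ℕ) : ZMod n)) = a + ((0 : ℕ) : ZMod n) := by
        rw [σspec 0 (by omega), if_neg (by omega)]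
      have e2 : σ (a + ((0 : ℕ) : ZMod n) + 1) = b := by
        rw [hsucc, σspec 1 (by omega), if_pos (by omega), show d + 1 - (0 + 1) = d by omega, ← hb]
      have e3 : τ (a + ((0 : ℕ) : ZMod n)) = a + ((0 : ℕ) : ZMod n) := by
        rw [τspec 0 (by omega), if_neg (by omega)]
      rw [ez] at e1 e2 e3
      rw [show F (a + ((0 : ℕ) : ZMod n)) = F a by rw [ez],
        show τ (a + ((0 : ℕ) : ZMod n)) = τ a by rw [ez]]
      simp only [hF, hG, e1, e2, e3, if_pos rfl]
    · have e1 : σ (a + (t : ZMod n)) = a + ((d + 1 - t : ℕ) : ZMod n) := by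
        rw [σspec t ht, if_pos (by omega)]
      have e2 : σ (a + (t : ZMod n) + 1) = a + ((d - t : ℕ) : ZMod n) := by
        rw [hsucc, σspec (t + 1) (by omega), if_pos (by omega),
          show d + 1 - (t + 1) = d - t by omega]
      have e3 : τ (a + (t : ZMod n)) = a + ((d - t : ℕ) : ZMod n) := by
        rw [τspec t ht, if_pos (by omega)]
      have ena : a + ((d - t : ℕ) : ZMod n) ≠ a := by
        intro h
        have h0 : a + ((d - t : ℕ) : ZMod n) = a + ((0 : ℕ) : ZMod n) := by
          rw [Nat.cast_zero, add_zero]; exact h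
        have := hinj (d - t) 0 (by omega) (by omega) h0
        omega
      have enb : a + ((d - t : ℕ) : ZMod n) ≠ b := by
        intro h
        rw [hb] at h
        have := hinj (d - t) d (by omega) hnd h
        omega
      have e4 : a + ((d - t : ℕ) : ZMod n) + 1 = a + ((d + 1 - t : ℕ) : ZMod n) := by
        rw [hsucc, show d - t + 1 = d + 1 - t by omega]
      simp only [hF, hG, hE, e1, e2, e3, if_neg ena, if_neg enb, e4]
      exact dist_comm _ _
    · subst h2
      have e1 : σ (a + ((d : ℕ) : ZMod n)) = a + 1 := by
        rw [σspec d hnd, if_pos (by omega), show d + 1 - d = 1 by omega, Nat.cast_one]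
      have e2 : σ (a + ((d : ℕ) : ZMod n) + 1) = a + ((d : ℕ) : ZMod n) + 1 := by
        rw [hsucc, σspec (d + 1) (by omega), if_neg (by omega), ← hsucc]
      have e3 : τ (a + ((d : ℕ) : ZMod n)) = a + ((d : ℕ) : ZMod n) := by
        rw [τspec d hnd, if_neg (by omega)]
      have hkb : a + ((d : ℕ) : ZMod n) = b := hb.symm
      rw [hkb] at e1 e2 e3
      rw [show F (a + ((d : ℕ) : ZMod n)) = F b by rw [hkb],
        show τ (a + ((d : ℕ) : ZMod n)) = τ b by rw [hkb]]
      simp only [hF, hG, e1, e2, e3, if_neg hba, eq_self_iff_true, if_true]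
    · have e1 : σ (a + (t : ZMod n)) = a + (t : ZMod n) := by
        rw [σspec t ht, if_neg (by omega)]
      have e2 : σ (a + (t : ZMod n) + 1) = a + (t : ZMod n) + 1 := by
        rcases show t + 1 < n ∨ t + 1 = n by omega with h | h
        · rw [hsucc, σspec (t + 1) h, if_neg (by omega), ← hsucc]
        · have h0 : a + (t : ZMod n) + 1 = a + ((0 : ℕ) : ZMod n) := by
            rw [hsucc, h]
            simp [ZMod.natCast_self]
          rw [h0, σspec 0 (by omega), if_neg (by omega)]
      have e3 : τ (a + (t : ZMod n)) = a + (t : ZMod n) := by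
        rw [τspec t ht, if_neg (by omega)]
      have ena : a + ((t : ℕ) : ZMod n) ≠ a := by
        intro h
        have h0 : a + ((t : ℕ) : ZMod n) = a + ((0 : ℕ) : ZMod n) := by
          rw [Nat.cast_zero, add_zero]; exact h
        have := hinj t 0 ht (by omega) h0
        omega
      have enb : a + ((t : ℕ) : ZMod n) ≠ b := by
        intro h
        rw [hb] at h
        have := hinj t d ht hnd h
        omega
      simp only [hF, hG, hE, e1, e2, e3, if_neg ena, if_neg enb]
  -- multiset bookkeeping
  refine ⟨σ, σinv.bijective, ?_⟩
  have hamem : a ∈ (Finset.univ.val : Multiset (ZMod n)) := Finset.mem_univ_val a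
  have hbmem : b ∈ (Finset.univ.val : Multiset (ZMod n)).erase a :=
    (Multiset.Nodup.mem_erase_iff Finset.univ.nodup).mpr ⟨hba, Finset.mem_univ_val b⟩
  have hsplit : (Finset.univ.val : Multiset (ZMod n))
      = a ::ₘ b ::ₘ ((Finset.univ.val.erase a).erase b) := by
    rw [Multiset.cons_erase hbmem, Multiset.cons_erase hamem]
  set rest := ((Finset.univ.val : Multiset (ZMod n)).erase a).erase b with hrest
  have hmapτ : Multiset.map τ (Finset.univ.val : Multiset (ZMod n)) = Finset.univ.val :=
    (Multiset.bijective_iff_map_univ_eq_univ τ).mp τinv.bijective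
  have hFmap : Multiset.map F (Finset.univ.val : Multiset (ZMod n))
      = Multiset.map G (Finset.univ.val : Multiset (ZMod n)) := by
    calc Multiset.map F Finset.univ.val = Multiset.map (G ∘ τ) Finset.univ.val := by
          exact Multiset.map_congr rfl (fun k _ => FG k)
      _ = Multiset.map G (Multiset.map τ Finset.univ.val) := by rw [Multiset.map_map]
      _ = Multiset.map G Finset.univ.val := by rw [hmapτ]
  have hrestG : Multiset.map G rest = Multiset.map E rest := by
    refine Multiset.map_congr rfl ?_
    intro k hk
    have hk1 : k ≠ b ∧ k ∈ Finset.univ.val.erase a :=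
      (Multiset.Nodup.mem_erase_iff (Multiset.Nodup.erase a Finset.univ.nodup)).mp hk
    have hk2 : k ≠ a := ((Multiset.Nodup.mem_erase_iff Finset.univ.nodup).mp hk1.2).1
    rw [hG]
    simp only [if_neg hk2, if_neg hk1.1]
  refine ⟨Multiset.map E rest, ?_, ?_⟩
  · rw [hFmap, hsplit, Multiset.map_cons, Multiset.map_cons, hrestG]
    have ga : G a = dist (m a) (m b) := by rw [hG]; simp
    have gb : G b = dist (m (a + 1)) (m (b + 1)) := by rw [hG]; simp [hba]
    rw [ga, gb]
  · rw [hsplit, Multiset.map_cons, Multiset.map_cons]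

lemma dseq_eq_dsort (S : Finset (EuclideanSpace ℝ (Fin 2))) [NeZero S.card]
    (c : ZMod S.card → EuclideanSpace ℝ (Fin 2)) :
    dseq S c = dsort (Multiset.map (fun k => dist (c k) (c (k + 1)))
      (Finset.univ : Finset (ZMod S.card)).val) := by
  rw [dseq, insertionSort_eq_dsort]
  congr 1
  rw [List.bind_eq_flatMap]
  simp only [List.pure_def]
  rw [← List.map_eq_flatMap, List.map_map]
  have hbij : Function.Bijective (fun i : Fin S.card => ((i : ℕ) : ZMod S.card)) := by
    constructor
    · intro i j h
      simp only at h
      have hi := ZMod.val_cast_of_lt (n := S.card) i.isLt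
      have hj := ZMod.val_cast_of_lt (n := S.card) j.isLt
      apply Fin.ext
      rw [← hi, ← hj, h]
    · intro z
      refine ⟨⟨z.val, z.val_lt⟩, ?_⟩
      exact ZMod.natCast_rightInverse z
  have h2 : Multiset.map (fun i : Fin S.card => ((i : ℕ) : ZMod S.card))
      (Finset.univ : Finset (Fin S.card)).val = (Finset.univ : Finset (ZMod S.card)).val :=
    (Multiset.bijective_iff_map_univ_eq_univ _).mp hbij
  calc ((List.map ((fun i : ℕ => dist (c (i : ZMod S.card)) (c ((i : ZMod S.card) + 1))) ∘ Fin.val)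
        (List.finRange S.card) : List ℝ) : Multiset ℝ)
      = Multiset.map ((fun k => dist (c k) (c (k + 1))) ∘
          (fun i : Fin S.card => ((i : ℕ) : ZMod S.card)))
        ((Finset.univ : Finset (Fin S.card)).val) := by
        rw [Fin.univ_def]
        rfl
    _ = Multiset.map (fun k => dist (c k) (c (k + 1)))
        (Multiset.map (fun i : Fin S.card => ((i : ℕ) : ZMod S.card))
          (Finset.univ : Finset (Fin S.card)).val) := by rw [Multiset.map_map]
    _ = _ := by rw [h2]
lemma dist_xy_two (x y : EuclideanSpace ℝ (Fin 2))
    (hx : x = (EuclideanSpace.equiv (Fin 2) ℝ).symm ![-1, 0])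
    (hy : y = (EuclideanSpace.equiv (Fin 2) ℝ).symm ![1, 0]) : dist x y = 2 := by
  subst hx hy
  rw [EuclideanSpace.dist_eq]
  simp [EuclideanSpace.equiv, Fin.sum_univ_two]
  rw [show dist (-1 : ℝ) 1 = 2 by rw [Real.dist_eq]; norm_num]

lemma dist_uy_lt_two (x y u : EuclideanSpace ℝ (Fin 2))
    (hx : x = (EuclideanSpace.equiv (Fin 2) ℝ).symm ![-1, 0])
    (hy : y = (EuclideanSpace.equiv (Fin 2) ℝ).symm ![1, 0])
    (hu1 : ‖u‖ ≤ 1) (hux : u ≠ x) : dist u y < 2 := by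
  have hyn : ‖y‖ = 1 := by
    subst hy
    rw [EuclideanSpace.norm_eq]
    simp [EuclideanSpace.equiv, Fin.sum_univ_two]
  have hxy : x = -y := by
    subst hx hy
    ext i
    fin_cases i <;> simp [EuclideanSpace.equiv]
  by_contra h
  push_neg at h
  have par : ‖u - y‖ ^ 2 + ‖u + y‖ ^ 2 = 2 * (‖u‖ ^ 2 + ‖y‖ ^ 2) := by
    have := parallelogram_law_with_norm ℝ u y
    nlinarith [this]
  have h1 : ‖u - y‖ ≥ 2 := by rwa [dist_eq_norm] at h
  have h2 : ‖u + y‖ ^ 2 ≤ 0 := by nlinarith [norm_nonneg (u - y), norm_nonneg u]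
  have h3 : u + y = 0 := by
    have h4 := norm_nonneg (u + y)
    have : ‖u + y‖ = 0 := by nlinarith
    exact norm_eq_zero.mp this
  apply hux
  rw [hxy]
  linear_combination (norm := module) h3

theorem stmt_9 (S : Finset (EuclideanSpace ℝ (Fin 2))) (hS : 3 ≤ S.card)
    (m : ZMod S.card → EuclideanSpace ℝ (Fin 2)) (hm : IsMinHamCycle S m)
    (x y : EuclideanSpace ℝ (Fin 2))
    (hx : x = (EuclideanSpace.equiv (Fin 2) ℝ).symm ![-1, 0])
    (hy : y = (EuclideanSpace.equiv (Fin 2) ℝ).symm ![1, 0])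
    (i₀ : ZMod S.card) (hix : m i₀ = x) (hiy : m (i₀ + 1) = y)
    (u : EuclideanSpace ℝ (Fin 2)) (huS : u ∈ S) (hu1 : ‖u‖ ≤ 1)
    (hux : u ≠ x) (huy : u ≠ y)
    (j : ZMod S.card) (hju : m j = u)
    (s : EuclideanSpace ℝ (Fin 2)) (hs : s = m (j - 1)) (hsy : s ≠ y) :
    dist s x ≥ dist s u ∧ dist s x ≥ 2 := by
  haveI : NeZero S.card := ⟨by omega⟩
  obtain ⟨a, ha⟩ : ∃ a : ZMod S.card, a = j - 1 := ⟨j - 1, rfl⟩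
  have hma : m a = s := by rw [ha, ← hs]
  have hja : j = a + 1 := by rw [ha]; ring
  have hma1 : m (a + 1) = u := by rw [← hja]; exact hju
  have hab : a ≠ i₀ := by
    intro h
    apply huy
    rw [← hju, hja, h, hiy]
  have ha1b : a + 1 ≠ i₀ := by
    intro h
    apply hux
    rw [← hju, hja, h, hix]
  have hb1a : i₀ + 1 ≠ a := by
    intro h
    apply hsy
    rw [← hma, ← h, hiy]
  have hdecomp : i₀ = a + (((i₀ - a).val : ℕ) : ZMod S.card) := by
    rw [ZMod.natCast_rightInverse (i₀ - a), add_sub_cancel]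
  have hd0 : (i₀ - a).val ≠ 0 := by
    intro h
    apply hab
    have h2 : i₀ - a = 0 := (ZMod.val_eq_zero _).mp h
    have := sub_eq_zero.mp h2
    exact this.symm
  have hd1 : (i₀ - a).val ≠ 1 := by
    intro h
    apply ha1b
    rw [h] at hdecomp
    rw [hdecomp, Nat.cast_one]
  have hdtop : (i₀ - a).val ≠ S.card - 1 := by
    intro h
    apply hb1a
    rw [h] at hdecomp
    have hz : ((S.card - 1 : ℕ) : ZMod S.card) + 1 = 0 := by
      have h5 : ((S.card - 1 : ℕ) : ZMod S.card) + ((1 : ℕ) : ZMod S.card)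
          = ((S.card : ℕ) : ZMod S.card) := by
        rw [← Nat.cast_add]
        congr 1
        omega
      rw [ZMod.natCast_self] at h5
      simpa using h5
    calc i₀ + 1 = a + (((S.card - 1 : ℕ) : ZMod S.card) + 1) := by rw [hdecomp]; ring
      _ = a := by rw [hz, add_zero]
  have hdlt : (i₀ - a).val < S.card := ZMod.val_lt _
  have hd2 : 2 ≤ (i₀ - a).val := by omega
  have hdn : (i₀ - a).val + 2 ≤ S.card := by omega
  obtain ⟨σ, hσbij, R, hF, hE⟩ := exchange m a i₀ hd2 hdn
  rw [hma, hma1, hix, hiy] at hF hE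
  rw [dist_xy_two x y hx hy] at hE
  have hcH : IsHamCycle S (fun k => m (σ k)) :=
    ⟨hm.1.1.comp hσbij.injective, fun i => hm.1.2 _⟩
  have hdc : dseq S (fun k => m (σ k)) = dsort (dist s x ::ₘ dist u y ::ₘ R) := by
    rw [dseq_eq_dsort S (fun k => m (σ k))]
    rw [← hF]
  have hdm : dseq S m = dsort (dist s u ::ₘ (2 : ℝ) ::ₘ R) := by
    rw [dseq_eq_dsort S m]
    rw [← hE]
  have hcomm : ∀ (p q : ℝ) (T : Multiset ℝ), T + (p ::ₘ q ::ₘ 0) = p ::ₘ q ::ₘ T := by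
    intro p q T
    rw [add_comm]
    simp [Multiset.cons_add]
  have main : ∀ v : ℝ, dist s x < v → dist u y < v → (v ≤ dist s u ∨ v ≤ 2) → False := by
    intro v h1 h2 h3
    have hP : ∀ p ∈ (dist s x ::ₘ dist u y ::ₘ (0 : Multiset ℝ)), p < v := by
      intro p hp
      rcases Multiset.mem_cons.mp hp with h | hp
      · rw [h]; exact h1
      rcases Multiset.mem_cons.mp hp with h | hp
      · rw [h]; exact h2
      · exact absurd hp (Multiset.notMem_zero p)
    have hQ : ∃ q ∈ (dist s u ::ₘ (2 : ℝ) ::ₘ (0 : Multiset ℝ)), v ≤ q := by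
      rcases h3 with h | h
      · exact ⟨dist s u, Multiset.mem_cons_self _ _, h⟩
      · exact ⟨2, Multiset.mem_cons.mpr (Or.inr (Multiset.mem_cons_self _ _)), h⟩
    have hlex := key_lex v R.card R _ _ rfl hP hQ (by simp)
    rw [hcomm, hcomm] at hlex
    exact hm.2 _ hcH (by rw [hdc, hdm]; exact hlex)
  have huy2 : dist u y < 2 := dist_uy_lt_two x y u hx hy hu1 hux
  have hsx2 : dist s x ≥ 2 := by
    by_contra h
    push_neg at h
    exact main 2 h huy2 (Or.inr le_rfl)
  refine ⟨?_, hsx2⟩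
  by_contra h
  push_neg at h
  exact main (dist s u) h (lt_of_lt_of_le huy2 (le_trans hsx2 h.le)) (Or.inl le_rfl)

end
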